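/- arXiv:1504.06147 — 5 statements merged into one kernel-verified Lean document; each statement's English description precedes it below -/
import Mathlib

section
/- For every s ≥ 0, F(√s) ≤ √(F(s)) ≤ 2·F(√s), where F(t) = t - log(1+t). -/
open Real Set

private lemma nonneg_of_deriv (f : ℝ → ℝ) (h0 : f 0 = 0)
    (hc : ContinuousOn f (Set.Ici 0))
    (hd : ∀ x : ℝ, 0 < x → ∃ d, HasDerivAt f d x ∧ 0 ≤ d) :
    ∀ t : ℝ, 0 ≤ t → 0 ≤ f t := by
  have hmono : MonotoneOn f (Set.Ici 0) := by
    apply monotoneOn_of_deriv_nonneg (convex_Ici 0) hc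
    · intro x hx
      rw [interior_Ici] at hx
      obtain ⟨d, hd', _⟩ := hd x hx
      exact hd'.differentiableAt.differentiableWithinAt
    · intro x hx
      rw [interior_Ici] at hx
      obtain ⟨d, hd', hdn⟩ := hd x hx
      rw [hd'.deriv]; exact hdn
  intro t ht
  have := hmono Set.self_mem_Ici (Set.mem_Ici.mpr ht) ht
  linarith [h0 ▸ this]

private lemma log_deriv (x : ℝ) (hx : 0 < x) :
    HasDerivAt (fun y : ℝ => Real.log (1 + y)) (1 / (1 + x)) x := by
  have h1 : HasDerivAt (fun y : ℝ => 1 + y) 1 x := (hasDerivAt_id x).const_add 1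
  simpa using h1.log (by linarith)

private lemma log_sq_deriv (x : ℝ) (hx : 0 < x) :
    HasDerivAt (fun y : ℝ => Real.log (1 + y ^ 2)) (2 * x / (1 + x ^ 2)) x := by
  have h1 : HasDerivAt (fun y : ℝ => 1 + y ^ 2) (2 * x) x := by
    simpa using (hasDerivAt_pow 2 x).const_add 1
  have := h1.log (by positivity)
  simpa using this

private lemma cont_log : ContinuousOn (fun y : ℝ => Real.log (1 + y)) (Set.Ici 0) := by
  intro x hx
  simp only [Set.mem_Ici] at hx
  exact ((Real.continuousAt_log (by linarith)).comp (by fun_prop)).continuousWithinAt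

private lemma cont_log_sq : ContinuousOn (fun y : ℝ => Real.log (1 + y ^ 2)) (Set.Ici 0) := by
  intro x hx
  have h : (0:ℝ) < 1 + x ^ 2 := by positivity
  exact ((Real.continuousAt_log (by linarith)).comp (by fun_prop)).continuousWithinAt

private lemma F_nonneg (t : ℝ) (ht : 0 ≤ t) : 0 ≤ t - Real.log (1 + t) := by
  have := Real.log_le_sub_one_of_pos (show (0:ℝ) < 1 + t by linarith)
  linarith

private lemma Llower (t : ℝ) (ht : 0 ≤ t) :
    t ^ 2 ≤ (t - Real.log (1 + t)) * (2 * (1 + t)) := by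
  have key : ∀ u : ℝ, 0 ≤ u →
      0 ≤ u - Real.log (1 + u) - u ^ 2 / (2 * (1 + u)) := by
    apply nonneg_of_deriv
    · norm_num
    · refine ContinuousOn.sub (ContinuousOn.sub continuous_id.continuousOn cont_log) ?_
      refine ContinuousOn.div (by fun_prop) (by fun_prop) ?_
      intro x hx; simp only [Set.mem_Ici] at hx; positivity
    · intro x hx
      have h1 : (0:ℝ) < 1 + x := by linarith
      have hnum : HasDerivAt (fun y : ℝ => y ^ 2) (2 * x) x := by
        simpa using hasDerivAt_pow 2 x
      have hden : HasDerivAt (fun y : ℝ => 2 * (1 + y)) 2 x := by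
        simpa using ((hasDerivAt_id x).const_add 1).const_mul 2
      have hdiv := hnum.div hden (by positivity)
      have hder := ((hasDerivAt_id x).sub (log_deriv x hx)).sub hdiv
      have hder2 : HasDerivAt
          (fun u : ℝ => u - Real.log (1 + u) - u ^ 2 / (2 * (1 + u)))
          (x ^ 2 / (2 * (1 + x) ^ 2)) x := by
        refine hder.congr_deriv ?_
        field_simp
        ring
      exact ⟨_, hder2, by positivity⟩
  have h := key t ht
  have h1 : (0:ℝ) < 2 * (1 + t) := by linarith
  rw [sub_nonneg, div_le_iff₀ h1] at h
  linarith

private lemma Lupper (t : ℝ) (ht : 0 ≤ t) :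
    (t - Real.log (1 + t)) * (1 + t ^ 2) ≤ t ^ 2 * (1 + t) := by
  have key : ∀ u : ℝ, 0 ≤ u →
      0 ≤ u ^ 2 * (1 + u) / (1 + u ^ 2) - u + Real.log (1 + u) := by
    apply nonneg_of_deriv
    · norm_num
    · refine ContinuousOn.add (ContinuousOn.sub ?_ continuous_id.continuousOn) cont_log
      refine ContinuousOn.div (by fun_prop) (by fun_prop) ?_
      intro x hx; positivity
    · intro x hx
      have h1 : (0:ℝ) < 1 + x := by linarith
      have h2 : (0:ℝ) < 1 + x ^ 2 := by positivity
      have hsq : HasDerivAt (fun y : ℝ => y ^ 2) (2 * x) x := by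
        simpa using hasDerivAt_pow 2 x
      have hnum : HasDerivAt (fun y : ℝ => y ^ 2 * (1 + y))
          (2 * x * (1 + x) + x ^ 2 * 1) x :=
        hsq.mul ((hasDerivAt_id x).const_add 1)
      have hden : HasDerivAt (fun y : ℝ => 1 + y ^ 2) (2 * x) x := by
        simpa using (hasDerivAt_pow 2 x).const_add 1
      have hdiv := hnum.div hden (by positivity)
      have hder := (hdiv.sub (hasDerivAt_id x)).add (log_deriv x hx)
      have hder2 : HasDerivAt
          (fun u : ℝ => u ^ 2 * (1 + u) / (1 + u ^ 2) - u + Real.log (1 + u))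
          ((x + 5 * x ^ 2 + x ^ 3 + x ^ 4) / ((1 + x ^ 2) ^ 2 * (1 + x))) x := by
        refine hder.congr_deriv ?_
        field_simp
        ring
      refine ⟨_, hder2, by positivity⟩
  have h := key t ht
  have h2 : (0:ℝ) < 1 + t ^ 2 := by positivity
  rw [show t ^ 2 * (1 + t) / (1 + t ^ 2) - t + Real.log (1 + t)
      = t ^ 2 * (1 + t) / (1 + t ^ 2) - (t - Real.log (1 + t)) by ring, sub_nonneg,
    le_div_iff₀ h2] at h
  linarith

private lemma claim1 (t : ℝ) (ht : 0 ≤ t) :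
    (t - Real.log (1 + t)) ^ 2 ≤ t ^ 2 - Real.log (1 + t ^ 2) := by
  have key : ∀ u : ℝ, 0 ≤ u →
      0 ≤ u ^ 2 - Real.log (1 + u ^ 2) - (u - Real.log (1 + u)) ^ 2 := by
    apply nonneg_of_deriv
    · norm_num
    · refine ContinuousOn.sub (ContinuousOn.sub (by fun_prop) cont_log_sq) ?_
      exact (ContinuousOn.sub continuous_id.continuousOn cont_log).pow 2
    · intro x hx
      have h1 : (0:ℝ) < 1 + x := by linarith
      have h2 : (0:ℝ) < 1 + x ^ 2 := by positivity
      have hsq : HasDerivAt (fun y : ℝ => y ^ 2) (2 * x) x := by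
        simpa using hasDerivAt_pow 2 x
      have hF : HasDerivAt (fun y : ℝ => y - Real.log (1 + y)) (1 - 1 / (1 + x)) x :=
        (hasDerivAt_id x).sub (log_deriv x hx)
      have hF2 := hF.pow 2
      have hder := (hsq.sub (log_sq_deriv x hx)).sub hF2
      set L := Real.log (1 + x) with hL
      have hder2 : HasDerivAt
          (fun u : ℝ => u ^ 2 - Real.log (1 + u ^ 2) - (u - Real.log (1 + u)) ^ 2)
          ((2 * x ^ 3 * (1 + x) - 2 * (x - L) * x * (1 + x ^ 2)) / ((1 + x ^ 2) * (1 + x))) x := by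
        refine hder.congr_deriv ?_
        field_simp
        ring
      refine ⟨_, hder2, div_nonneg ?_ (by positivity)⟩
      have hup := Lupper x hx.le
      nlinarith [mul_le_mul_of_nonneg_right hup hx.le]
  have h := key t ht
  linarith

private lemma claim2 (t : ℝ) (ht : 0 ≤ t) :
    t ^ 2 - Real.log (1 + t ^ 2) ≤ 4 * (t - Real.log (1 + t)) ^ 2 := by
  have key : ∀ u : ℝ, 0 ≤ u →
      0 ≤ 4 * (u - Real.log (1 + u)) ^ 2 - (u ^ 2 - Real.log (1 + u ^ 2)) := by
    apply nonneg_of_deriv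
    · norm_num
    · refine ContinuousOn.sub ?_ (ContinuousOn.sub (by fun_prop) cont_log_sq)
      exact ContinuousOn.mul continuousOn_const
        ((ContinuousOn.sub continuous_id.continuousOn cont_log).pow 2)
    · intro x hx
      have h1 : (0:ℝ) < 1 + x := by linarith
      have h2 : (0:ℝ) < 1 + x ^ 2 := by positivity
      have hsq : HasDerivAt (fun y : ℝ => y ^ 2) (2 * x) x := by
        simpa using hasDerivAt_pow 2 x
      have hF : HasDerivAt (fun y : ℝ => y - Real.log (1 + y)) (1 - 1 / (1 + x)) x :=
        (hasDerivAt_id x).sub (log_deriv x hx)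
      have hF2 := (hF.pow 2).const_mul 4
      have hder := hF2.sub (hsq.sub (log_sq_deriv x hx))
      set L := Real.log (1 + x) with hL
      have hder2 : HasDerivAt
          (fun u : ℝ => 4 * (u - Real.log (1 + u)) ^ 2 - (u ^ 2 - Real.log (1 + u ^ 2)))
          ((8 * (x - L) * x * (1 + x ^ 2) * (1 + x) - 2 * x ^ 3 * (1 + x) ^ 2)
            / ((1 + x) ^ 2 * (1 + x ^ 2))) x := by
        refine hder.congr_deriv ?_
        field_simp
        ring
      refine ⟨_, hder2, div_nonneg ?_ (by positivity)⟩
      have hlo := Llower x hx.le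
      nlinarith [mul_le_mul_of_nonneg_right hlo (by positivity : (0:ℝ) ≤ x * (1 + x ^ 2)),
        mul_nonneg (mul_nonneg (by norm_num : (0:ℝ) ≤ 2) (pow_nonneg hx.le 3)) (sq_nonneg (x - 1))]
  have h := key t ht
  linarith

theorem stmt_2 (s : ℝ) (hs : 0 ≤ s) :
    Real.sqrt s - Real.log (1 + Real.sqrt s) ≤ Real.sqrt (s - Real.log (1 + s)) ∧
    Real.sqrt (s - Real.log (1 + s)) ≤ 2 * (Real.sqrt s - Real.log (1 + Real.sqrt s)) := by
  set t := Real.sqrt s with htdef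
  have ht : 0 ≤ t := Real.sqrt_nonneg s
  have hts : t ^ 2 = s := Real.sq_sqrt hs
  have hFt : 0 ≤ t - Real.log (1 + t) := F_nonneg t ht
  have h1 : (t - Real.log (1 + t)) ^ 2 ≤ s - Real.log (1 + s) := by
    have := claim1 t ht; rw [hts] at this; exact this
  have h2 : s - Real.log (1 + s) ≤ (2 * (t - Real.log (1 + t))) ^ 2 := by
    have := claim2 t ht; rw [hts] at this; nlinarith [this]
  constructor
  · calc t - Real.log (1 + t) = Real.sqrt ((t - Real.log (1 + t)) ^ 2) :=
          (Real.sqrt_sq hFt).symm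
      _ ≤ Real.sqrt (s - Real.log (1 + s)) := Real.sqrt_le_sqrt h1
  · calc Real.sqrt (s - Real.log (1 + s))
        ≤ Real.sqrt ((2 * (t - Real.log (1 + t))) ^ 2) := Real.sqrt_le_sqrt h2
      _ = 2 * (t - Real.log (1 + t)) := Real.sqrt_sq (by linarith)
end

section
/- For any finite family of nonnegative reals s₁, …, s_k, we have ∑ᵢ F(sᵢ) ≥ (1/4)·F(√(∑ᵢ sᵢ²)), where F(t) = t - log(1+t). -/
lemma log_le_half (t : ℝ) (ht : 0 ≤ t) :
    Real.log (1 + t) ≤ ((1 + t) - (1 + t)⁻¹) / 2 := by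
  have hx : (0:ℝ) < 1 + t := by linarith
  have h1 : (0:ℝ) ≤ Real.log (1 + t) := Real.log_nonneg (by linarith)
  have := (Real.self_le_sinh_iff).mpr h1
  rwa [Real.sinh_log hx] at this

lemma F_lower (t : ℝ) (ht : 0 ≤ t) :
    t - Real.log (1 + t) ≥ min (t^2) t / 4 := by
  have hx : (0:ℝ) < 1 + t := by linarith
  have hinv : (1 + t) * (1 + t)⁻¹ = 1 := mul_inv_cancel₀ (ne_of_gt hx)
  have h := log_le_half t ht
  rcases le_total t 1 with h1 | h1
  · have : min (t^2) t = t^2 := by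
      apply min_eq_left; nlinarith
    rw [this]
    nlinarith [sq_nonneg t, mul_pos hx hx]
  · have : min (t^2) t = t := by
      apply min_eq_right; nlinarith
    rw [this]
    nlinarith [mul_pos hx hx]

lemma F_upper (t : ℝ) (ht : 0 ≤ t) :
    t - Real.log (1 + t) ≤ min (t^2) t := by
  have hx : (0:ℝ) < 1 + t := by linarith
  have hinv : (1 + t) * (1 + t)⁻¹ = 1 := mul_inv_cancel₀ (ne_of_gt hx)
  have h1 : 1 - (1 + t)⁻¹ ≤ Real.log (1 + t) := Real.one_sub_inv_le_log_of_pos hx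
  have h2 : (0:ℝ) ≤ Real.log (1 + t) := Real.log_nonneg (by linarith)
  apply le_min
  · nlinarith
  · linarith

theorem stmt_4 (k : ℕ) (s : Fin k → ℝ) (hs : ∀ i, 0 ≤ s i) :
    ∑ i, (s i - Real.log (1 + s i)) ≥
      (1/4) * (Real.sqrt (∑ i, (s i)^2) - Real.log (1 + Real.sqrt (∑ i, (s i)^2))) := by
  set Q := ∑ i, (s i)^2 with hQ
  have hQ0 : 0 ≤ Q := Finset.sum_nonneg fun i _ => sq_nonneg _
  set S := Real.sqrt Q with hSdef
  have hS0 : 0 ≤ S := Real.sqrt_nonneg _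
  have hS2 : S^2 = Q := Real.sq_sqrt hQ0
  -- lower bound on the sum
  have hL : ∑ i, (s i - Real.log (1 + s i)) ≥ (∑ i, min ((s i)^2) (s i)) / 4 := by
    rw [Finset.sum_div]
    exact Finset.sum_le_sum fun i _ => F_lower (s i) (hs i)
  -- key combinatorial inequality
  have hkey : ∑ i, min ((s i)^2) (s i) ≥ min Q S := by
    by_cases hall : ∀ i, s i ≤ 1
    · have : ∑ i, min ((s i)^2) (s i) = Q := by
        rw [hQ]
        exact Finset.sum_congr rfl fun i _ => min_eq_left (by nlinarith [hs i, hall i])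
      rw [this]
      exact min_le_left _ _
    · push_neg at hall
      obtain ⟨j, hj⟩ := hall
      have hne : (Finset.univ : Finset (Fin k)).Nonempty := ⟨j, Finset.mem_univ j⟩
      obtain ⟨m, _, hm⟩ := Finset.exists_max_image Finset.univ s hne
      have hm1 : 1 < s m := lt_of_lt_of_le hj (hm j (Finset.mem_univ j))
      set T := ∑ i, min ((s i)^2) (s i) with hT
      have hT0 : 0 ≤ T := Finset.sum_nonneg fun i _ => le_min (sq_nonneg _) (hs i)
      have htm : min ((s m)^2) (s m) = s m := min_eq_right (by nlinarith)
      have hTm : s m ≤ T := by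
        rw [hT, ← htm]
        exact Finset.single_le_sum (fun i _ => le_min (sq_nonneg _) (hs i))
          (Finset.mem_univ m)
      have hQle : Q ≤ s m * T := by
        rw [hQ, hT, Finset.mul_sum]
        apply Finset.sum_le_sum
        intro i _
        rcases le_total (s i) 1 with h1 | h1
        · rw [min_eq_left (by nlinarith [hs i])]
          nlinarith [hs i, sq_nonneg (s i)]
        · rw [min_eq_right (by nlinarith [hs i])]
          have : s i ≤ s m := hm i (Finset.mem_univ i)
          nlinarith [hs i]
      have hQT2 : Q ≤ T^2 := by nlinarith
      have hST : S ≤ T := by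
        rw [hSdef]
        calc Real.sqrt Q ≤ Real.sqrt (T^2) := Real.sqrt_le_sqrt hQT2
        _ = T := Real.sqrt_sq hT0
      exact le_trans (min_le_right _ _) hST
  -- upper bound on RHS
  have hU : S - Real.log (1 + S) ≤ min Q S := by
    have := F_upper S hS0
    rwa [hS2] at this
  have h4 : (1/4 : ℝ) * (S - Real.log (1 + S)) ≤ min Q S / 4 := by linarith
  linarith
end

section
/- The function s ↦ √(s - log(1+s)) is concave on [0,∞). -/
open Real Set

lemma key_ineq (x : ℝ) (hx : 0 ≤ x) : 2 * (x - Real.log (1 + x)) ≤ x ^ 2 := by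
  have h : MonotoneOn (fun y : ℝ => Real.log (1 + y) - y + y ^ 2 / 2) (Set.Ici 0) := by
    apply monotoneOn_of_deriv_nonneg (convex_Ici 0)
    · apply ContinuousOn.add
      · apply ContinuousOn.sub
        · intro y hy
          exact ((Real.continuousAt_log (by simp at hy; linarith)).comp
            (by fun_prop)).continuousWithinAt
        · fun_prop
      · fun_prop
    · intro y hy
      rw [interior_Ici] at hy
      have hy' : (0:ℝ) < y := hy
      have hD : HasDerivAt (fun y : ℝ => Real.log (1 + y) - y + y ^ 2 / 2)
          (1 / (1 + y) - 1 + y) y := by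
        have h1 : HasDerivAt (fun y : ℝ => Real.log (1 + y)) (1 / (1 + y)) y := by
          have := (Real.hasDerivAt_log (by linarith : (1:ℝ) + y ≠ 0)).comp y
            ((hasDerivAt_const y (1:ℝ)).add (hasDerivAt_id y))
          simpa [Function.comp_def] using this
        have h2 : HasDerivAt (fun y : ℝ => y ^ 2 / 2) y y := by
          have := ((hasDerivAt_pow 2 y).div_const 2)
          simpa using this
        simpa using (h1.fun_sub (hasDerivAt_id' y)).fun_add h2
      exact hD.differentiableAt.differentiableWithinAt
    · intro y hy
      rw [interior_Ici] at hy
      have hy' : (0:ℝ) < y := hy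
      have hD : HasDerivAt (fun y : ℝ => Real.log (1 + y) - y + y ^ 2 / 2)
          (1 / (1 + y) - 1 + y) y := by
        have h1 : HasDerivAt (fun y : ℝ => Real.log (1 + y)) (1 / (1 + y)) y := by
          have := (Real.hasDerivAt_log (by linarith : (1:ℝ) + y ≠ 0)).comp y
            ((hasDerivAt_const y (1:ℝ)).add (hasDerivAt_id y))
          simpa [Function.comp_def] using this
        have h2 : HasDerivAt (fun y : ℝ => y ^ 2 / 2) y y := by
          have := ((hasDerivAt_pow 2 y).div_const 2)
          simpa using this
        simpa using (h1.fun_sub (hasDerivAt_id' y)).fun_add h2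
      rw [hD.deriv]
      have : 1 / (1 + y) - 1 + y = y ^ 2 / (1 + y) := by
        field_simp; ring
      rw [this]
      positivity
  have := h (Set.self_mem_Ici) (show x ∈ Set.Ici (0:ℝ) from hx) hx
  simp at this
  nlinarith [this]

theorem stmt_8 :
    ConcaveOn ℝ (Set.Ici (0:ℝ)) (fun s => Real.sqrt (s - Real.log (1 + s))) := by
  have hFpos : ∀ x : ℝ, 0 < x → 0 < x - Real.log (1 + x) := by
    intro x hx
    have := Real.log_lt_sub_one_of_pos (show (0:ℝ) < 1 + x by linarith)
      (by intro h; linarith [h])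
    linarith
  have hFderiv : ∀ x : ℝ, 0 < x →
      HasDerivAt (fun s : ℝ => s - Real.log (1 + s)) (x / (1 + x)) x := by
    intro x hx
    have h1 : HasDerivAt (fun s : ℝ => Real.log (1 + s)) (1 / (1 + x)) x := by
      have := (Real.hasDerivAt_log (by linarith : (1:ℝ) + x ≠ 0)).comp x
        ((hasDerivAt_const x (1:ℝ)).add (hasDerivAt_id x))
      simpa [Function.comp_def] using this
    have := (hasDerivAt_id x).sub h1
    refine this.congr_deriv ?_
    field_simp
    ring
  set f' : ℝ → ℝ := fun x => x / (1 + x) / (2 * Real.sqrt (x - Real.log (1 + x))) with hf'def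
  have hderiv1 : ∀ x ∈ interior (Set.Ici (0:ℝ)),
      HasDerivAt (fun s => Real.sqrt (s - Real.log (1 + s))) (f' x) x := by
    intro x hx
    rw [interior_Ici] at hx
    exact (hFderiv x hx).sqrt (ne_of_gt (hFpos x hx))
  refine concaveOn_of_hasDerivWithinAt2_nonpos (convex_Ici 0) ?_
    (f' := f')
    (f'' := fun x => (1 / (1 + x) ^ 2 * (2 * Real.sqrt (x - Real.log (1 + x)))
      - x / (1 + x) * (2 * (x / (1 + x) / (2 * Real.sqrt (x - Real.log (1 + x))))))
      / (2 * Real.sqrt (x - Real.log (1 + x))) ^ 2)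
    (fun x hx => (hderiv1 x hx).hasDerivWithinAt) ?_ ?_
  · -- continuity on Ici 0
    apply Real.continuous_sqrt.comp_continuousOn
    apply ContinuousOn.sub continuousOn_id
    intro y hy
    exact ((Real.continuousAt_log (by simp at hy; linarith)).comp
      (by fun_prop)).continuousWithinAt
  · -- second derivative
    intro x hx
    rw [interior_Ici] at hx
    have hx' : (0:ℝ) < x := hx
    have hF := hFpos x hx'
    have hS : 0 < Real.sqrt (x - Real.log (1 + x)) := Real.sqrt_pos.mpr hF
    have hx2 := hx'
    have hN : HasDerivAt (fun s : ℝ => s / (1 + s)) (1 / (1 + x) ^ 2) x := by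
      have := (hasDerivAt_id x).div ((hasDerivAt_const x (1:ℝ)).add (hasDerivAt_id x))
        (by linarith : (1:ℝ) + x ≠ 0)
      refine this.congr_deriv ?_
      simp only [Pi.add_apply, id]
      field_simp
      ring
    have hD : HasDerivAt (fun s : ℝ => 2 * Real.sqrt (s - Real.log (1 + s)))
        (2 * (x / (1 + x) / (2 * Real.sqrt (x - Real.log (1 + x))))) x :=
      ((hFderiv x hx').sqrt (ne_of_gt hF)).const_mul 2
    have := hN.div hD (by positivity)
    exact this.hasDerivWithinAt
  · -- nonpositivity
    intro x hx
    rw [interior_Ici] at hx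
    have hx' : (0:ℝ) < x := hx
    have hF := hFpos x hx'
    have hS : 0 < Real.sqrt (x - Real.log (1 + x)) := Real.sqrt_pos.mpr hF
    have hSq : Real.sqrt (x - Real.log (1 + x)) ^ 2 = x - Real.log (1 + x) :=
      Real.sq_sqrt hF.le
    have hkey := key_ineq x hx'.le
    have h1x : (0:ℝ) < 1 + x := by linarith
    have : 1 / (1 + x) ^ 2 * (2 * Real.sqrt (x - Real.log (1 + x)))
        - x / (1 + x) * (2 * (x / (1 + x) / (2 * Real.sqrt (x - Real.log (1 + x)))))
        = (2 * (x - Real.log (1 + x)) - x ^ 2) / ((1 + x) ^ 2 * Real.sqrt (x - Real.log (1 + x))) := by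
      field_simp
      linear_combination 2 * hSq
    rw [this]
    apply div_nonpos_of_nonpos_of_nonneg _ (by positivity)
    · apply div_nonpos_of_nonpos_of_nonneg _ (by positivity)
      linarith
end

section
/- Let μ be a probability measure on ℝⁿ satisfying the Cheeger inequality h·∫|g - ∫g dμ| dμ ≤ ∫|∇g| dμ with constant h = 1 for all Lipschitz g ∈ L¹(μ). Then for every Lipschitz f: ℝⁿ → ℝ, ∫ F(|f - ∫f dμ|) dμ ≤ 192·∫ F(|∇f|) dμ, where F(t) = t - log(1+t). -/
open MeasureTheory Real Filter Set
open scoped ENNReal NNReal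

noncomputable section

namespace CheegerAux

/-- `Fp t = t - log (1 + t)`. -/
def Fp (t : ℝ) : ℝ := t - Real.log (1 + t)

lemma log_le_half {x : ℝ} (hx : 1 ≤ x) : Real.log x ≤ (x - x⁻¹) / 2 := by
  set g : ℝ → ℝ := fun y => (y - y⁻¹) / 2 - Real.log y with hg
  have hd : ∀ y : ℝ, 0 < y → HasDerivAt g ((1 - -(y ^ 2)⁻¹) / 2 - y⁻¹) y := by
    intro y hy
    exact (((hasDerivAt_id y).sub (hasDerivAt_inv hy.ne')).div_const 2).sub
      (Real.hasDerivAt_log hy.ne')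
  have hmono : MonotoneOn g (Ici 1) := by
    refine monotoneOn_of_deriv_nonneg (convex_Ici 1) ?_ ?_ ?_
    · intro y hy
      have hy0 : (0:ℝ) < y := lt_of_lt_of_le one_pos hy
      exact ((hd y hy0).continuousAt).continuousWithinAt
    · intro y hy
      rw [interior_Ici] at hy
      exact ((hd y (lt_trans one_pos hy)).differentiableAt).differentiableWithinAt
    · intro y hy
      rw [interior_Ici] at hy
      have hy0 : (0:ℝ) < y := lt_trans one_pos hy
      rw [(hd y hy0).deriv]
      have h1 : (y ^ 2)⁻¹ * y ^ 2 = 1 := inv_mul_cancel₀ (by positivity)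
      have h2 : y⁻¹ * y = 1 := inv_mul_cancel₀ hy0.ne'
      have h3 : (y ^ 2)⁻¹ = y⁻¹ ^ 2 := by rw [inv_pow]
      rw [h3]
      nlinarith [sq_nonneg (y⁻¹ - 1)]
  have h0 : g 1 = 0 := by simp [hg]
  have := hmono (mem_Ici.2 le_rfl) (mem_Ici.2 hx) hx
  rw [h0] at this
  simp only [hg] at this
  linarith

lemma Fp_zero : Fp 0 = 0 := by simp [Fp]

lemma Fp_nonneg {t : ℝ} (ht : 0 ≤ t) : 0 ≤ Fp t := by
  have := Real.log_le_sub_one_of_pos (show (0:ℝ) < 1 + t by linarith)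
  unfold Fp; linarith

lemma Fp_le_self {t : ℝ} (ht : 0 ≤ t) : Fp t ≤ t := by
  have := Real.log_nonneg (show (1:ℝ) ≤ 1 + t by linarith)
  unfold Fp; linarith

lemma Fp_le_sq {t : ℝ} (ht : 0 ≤ t) : Fp t ≤ t ^ 2 := by
  have hx : (0:ℝ) < 1 + t := by linarith
  have h2 := Real.log_le_sub_one_of_pos (inv_pos.2 hx)
  rw [Real.log_inv] at h2
  have hu : (1 + t)⁻¹ * (1 + t) = 1 := inv_mul_cancel₀ (ne_of_gt hx)
  have hu1 : (1 + t)⁻¹ ≤ 1 := by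
    rw [inv_le_one_iff₀]; right; linarith
  unfold Fp
  nlinarith [sq_nonneg t, mul_nonneg (sq_nonneg t) (inv_pos.2 hx).le]

lemma Fp_lower {t : ℝ} (ht : 0 ≤ t) : t ^ 2 / (1 + t) ≤ 2 * Fp t := by
  have hx : (0:ℝ) < 1 + t := by linarith
  have h := log_le_half (show (1:ℝ) ≤ 1 + t by linarith)
  have hkey : t ^ 2 / (1 + t) = 2 * t - ((1 + t) - (1 + t)⁻¹) := by
    field_simp
    ring
  unfold Fp
  rw [hkey]; linarith

lemma Fp_mono {a b : ℝ} (ha : 0 ≤ a) (hab : a ≤ b) : Fp a ≤ Fp b := by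
  have hxa : (0:ℝ) < 1 + a := by linarith
  have hxb : (0:ℝ) < 1 + b := by linarith
  have h := Real.log_le_sub_one_of_pos (div_pos hxb hxa)
  rw [Real.log_div (ne_of_gt hxb) (ne_of_gt hxa)] at h
  have h2 : (1 + b) / (1 + a) - 1 ≤ b - a := by
    rw [div_sub_one (ne_of_gt hxa), div_le_iff₀ hxa]
    nlinarith
  unfold Fp; linarith

lemma Fp_double {t : ℝ} (ht : 0 ≤ t) : Fp (2 * t) ≤ 4 * Fp t := by
  have hx : (0:ℝ) < 1 + t := by linarith
  have hx2 : (0:ℝ) < 1 + 2 * t := by linarith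
  have h1 : 2 * Real.log (1 + t) ≤ (t ^ 2 + 2 * t) / (1 + t) := by
    have := log_le_half (show (1:ℝ) ≤ 1 + t by linarith)
    have hkey : (t ^ 2 + 2 * t) / (1 + t) = ((1 + t) - (1 + t)⁻¹) := by
      field_simp
      ring
    rw [hkey]; linarith
  have h3 : 2 * Real.log (1 + t) - Real.log (1 + 2 * t) ≤ t ^ 2 / (1 + t) := by
    have hd := Real.log_le_sub_one_of_pos (div_pos (show (0:ℝ) < (1+t)^2 by positivity) hx2)
    rw [Real.log_div (by positivity) (ne_of_gt hx2), Real.log_pow] at hd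
    have h4 : (1 + t) ^ 2 / (1 + 2 * t) - 1 = t ^ 2 / (1 + 2 * t) := by
      rw [div_sub_one (ne_of_gt hx2)]
      congr 1
      ring
    have h5 : t ^ 2 / (1 + 2 * t) ≤ t ^ 2 / (1 + t) := by
      rw [div_le_div_iff₀ hx2 hx]
      nlinarith
    rw [h4] at hd
    push_cast at hd
    linarith
  have h6 : (t ^ 2 + 2 * t) / (1 + t) + t ^ 2 / (1 + t) = 2 * t := by
    field_simp
    ring
  unfold Fp
  linarith

lemma Fp_add {a b : ℝ} (ha : 0 ≤ a) (hb : 0 ≤ b) : Fp (a + b) ≤ 2 * Fp a + 2 * Fp b := by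
  have hmid : Fp (a + b) ≤ (Fp (2 * a) + Fp (2 * b)) / 2 := by
    have hlog : Real.log (1 + 2 * a) + Real.log (1 + 2 * b) ≤ 2 * Real.log (1 + a + b) := by
      rw [← Real.log_mul (by positivity) (by positivity)]
      have : (2:ℝ) * Real.log (1 + a + b) = Real.log ((1 + a + b) ^ 2) := by
        rw [Real.log_pow]; push_cast; ring
      rw [this]
      apply Real.log_le_log (by positivity)
      nlinarith [sq_nonneg (a - b)]
    unfold Fp
    have : 1 + (a + b) = 1 + a + b := by ring
    rw [this]
    linarith
  have h2 := Fp_double ha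
  have h3 := Fp_double hb
  linarith

lemma Fp_abs_add (x y : ℝ) : Fp |x + y| ≤ 2 * Fp |x| + 2 * Fp |y| := by
  have h1 : Fp |x + y| ≤ Fp (|x| + |y|) := Fp_mono (abs_nonneg _) (abs_add_le x y)
  have h2 := Fp_add (abs_nonneg x) (abs_nonneg y)
  linarith

lemma young {a b : ℝ} (ha : 0 ≤ a) (hb : 0 ≤ b) :
    a / (1 + a) * b ≤ Fp a / 2 + 8 * Fp b := by
  have hxa : (0:ℝ) < 1 + a := by linarith
  have hxb : (0:ℝ) < 1 + b := by linarith
  rcases le_or_gt b (a / 4) with h | h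
  · have h1 : a / (1 + a) * b ≤ a / (1 + a) * (a / 4) := by
      apply mul_le_mul_of_nonneg_left h (by positivity)
    have h2 : a / (1 + a) * (a / 4) = a ^ 2 / (1 + a) / 4 := by
      field_simp
    have h3 := Fp_lower ha
    have h4 := Fp_nonneg hb
    linarith
  · have hab : a ≤ 4 * b := by linarith
    have h1 : a / (1 + a) ≤ 4 * b / (1 + 4 * b) := by
      rw [div_le_div_iff₀ hxa (by linarith)]
      nlinarith
    have h2 : a / (1 + a) * b ≤ 4 * b / (1 + 4 * b) * b := by
      apply mul_le_mul_of_nonneg_right h1 hb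
    have h3 : 4 * b / (1 + 4 * b) * b ≤ 4 * (b ^ 2 / (1 + b)) := by
      have e1 : 4 * b / (1 + 4 * b) * b = 4 * b ^ 2 / (1 + 4 * b) := by ring
      have e2 : 4 * (b ^ 2 / (1 + b)) = 4 * b ^ 2 / (1 + b) := by ring
      rw [e1, e2, div_le_div_iff₀ (by linarith) hxb]
      nlinarith
    have h4 := Fp_lower hb
    have h5 := Fp_nonneg ha
    linarith

/-- One-sided truncation `Φ_m(s) = Fp((s - m)⁺)`. -/
def Phi (m s : ℝ) : ℝ := Fp (max (s - m) 0)

/-- Its derivative. -/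
def Dp (m s : ℝ) : ℝ := max (s - m) 0 / (1 + max (s - m) 0)

lemma Dp_nonneg (m s : ℝ) : 0 ≤ Dp m s := by
  unfold Dp
  positivity

lemma Dp_le_one (m s : ℝ) : Dp m s ≤ 1 := by
  unfold Dp
  rw [div_le_one (by positivity)]
  linarith [le_max_right (s - m) 0]

lemma Phi_nonneg (m s : ℝ) : 0 ≤ Phi m s := Fp_nonneg (le_max_right _ _)

lemma Phi_le_abs (m s : ℝ) : Phi m s ≤ |s - m| := by
  refine le_trans (Fp_le_self (le_max_right _ _)) ?_
  rcases le_total (s - m) 0 with h | h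
  · simp [max_eq_right h, abs_nonneg]
  · rw [max_eq_left h, abs_of_nonneg h]

lemma Phi_of_le {m s : ℝ} (h : s ≤ m) : Phi m s = 0 := by
  rw [Phi, max_eq_right (by linarith), Fp_zero]

lemma Phi_le_sq (m s : ℝ) : Phi m s ≤ (s - m) ^ 2 := by
  refine le_trans (Fp_le_sq (le_max_right _ _)) ?_
  rcases le_total (s - m) 0 with h | h
  · rw [max_eq_right h]
    simpa using sq_nonneg (s - m)
  · rw [max_eq_left h]

lemma hasDerivAt_Phi (m s : ℝ) : HasDerivAt (Phi m) (Dp m s) s := by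
  rcases lt_trichotomy s m with h | h | h
  · have hval : Dp m s = 0 := by
      rw [Dp, max_eq_right (by linarith)]
      simp
    rw [hval]
    have hev : (fun _ : ℝ => (0:ℝ)) =ᶠ[nhds s] Phi m := by
      filter_upwards [Iio_mem_nhds h] with y hy
      rw [Phi_of_le (le_of_lt hy)]
    exact (hasDerivAt_const s (0:ℝ)).congr_of_eventuallyEq hev.symm
  · subst h
    have hval : Dp s s = 0 := by rw [Dp]; simp
    rw [hval, hasDerivAt_iff_isLittleO]
    rw [Asymptotics.isLittleO_iff]
    intro c hc
    filter_upwards [Metric.ball_mem_nhds s hc] with y hy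
    rw [Metric.mem_ball, Real.dist_eq] at hy
    have h1 : Phi s s = 0 := Phi_of_le le_rfl
    have h2 : 0 ≤ Phi s y := Phi_nonneg s y
    have h3 : Phi s y ≤ (y - s) ^ 2 := Phi_le_sq s y
    rw [h1]
    simp only [smul_zero, sub_zero, Real.norm_eq_abs]
    rw [abs_of_nonneg h2]
    calc Phi s y ≤ (y - s) ^ 2 := h3
      _ = |y - s| * |y - s| := by rw [abs_mul_abs_self (y - s)]; ring
      _ ≤ c * |y - s| := by
          apply mul_le_mul_of_nonneg_right (le_of_lt hy) (abs_nonneg _)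
  · have hpos : (0:ℝ) < 1 + (s - m) := by linarith
    have hform : HasDerivAt (fun y : ℝ => (y - m) - Real.log (1 + (y - m)))
        (1 - (1 + (s - m))⁻¹ * 1) s := by
      have hu : HasDerivAt (fun y : ℝ => 1 + (y - m)) 1 s := by
        simpa using ((hasDerivAt_id s).sub_const m).const_add 1
      have hlog := (Real.hasDerivAt_log (ne_of_gt hpos)).comp s hu
      exact ((hasDerivAt_id s).sub_const m).sub hlog
    have hval : Dp m s = 1 - (1 + (s - m))⁻¹ * 1 := by
      rw [Dp, max_eq_left (by linarith)]
      field_simp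
      ring
    rw [hval]
    apply hform.congr_of_eventuallyEq
    filter_upwards [Ioi_mem_nhds h] with y hy
    rw [Phi, Fp, max_eq_left (by simp at hy; linarith)]

lemma lipschitzWith_Phi (m : ℝ) : LipschitzWith 1 (Phi m) := by
  apply lipschitzWith_of_nnnorm_deriv_le (fun s => (hasDerivAt_Phi m s).differentiableAt)
  intro s
  rw [(hasDerivAt_Phi m s).deriv]
  rw [← NNReal.coe_le_coe, coe_nnnorm, Real.norm_eq_abs, abs_of_nonneg (Dp_nonneg m s)]
  simpa using Dp_le_one m s
lemma differentiableAt_of_comp {E : Type*} [NormedAddCommGroup E] [NormedSpace ℝ E]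
    {φ : ℝ → ℝ} {f : E → ℝ} {x : E} {d : ℝ} (hd : d ≠ 0)
    (hφ : HasStrictDerivAt φ d (f x)) (hfc : ContinuousAt f x)
    (h : DifferentiableAt ℝ (fun y => φ (f y)) x) : DifferentiableAt ℝ f x := by
  have hinv : ∀ᶠ s in nhds (f x), hφ.localInverse φ d (f x) hd (φ s) = s :=
    (hφ.hasStrictFDerivAt_equiv hd).eventually_left_inverse
  have hψ : DifferentiableAt ℝ (hφ.localInverse φ d (f x) hd) (φ (f x)) :=
    (hφ.to_localInverse hd).hasDerivAt.differentiableAt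
  have hcomp : DifferentiableAt ℝ (fun y => hφ.localInverse φ d (f x) hd (φ (f y))) x :=
    hψ.comp x h
  refine hcomp.congr_of_eventuallyEq ?_
  exact (hfc.eventually hinv).mono fun y hy => hy.symm

lemma key {E : Type*} [NormedAddCommGroup E] [NormedSpace ℝ E]
    {f : E → ℝ} {L : NNReal} (hf : LipschitzWith L f) (m : ℝ) (x : E) :
    ‖fderiv ℝ (fun y => Phi m (f y)) x‖ ≤ Dp m (f x) * ‖fderiv ℝ f x‖ := by
  by_cases hdiff : DifferentiableAt ℝ f x
  · have h : HasFDerivAt (fun y => Phi m (f y)) (Dp m (f x) • fderiv ℝ f x) x :=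
      (hasDerivAt_Phi m (f x)).comp_hasFDerivAt x hdiff.hasFDerivAt
    rw [h.fderiv, norm_smul, Real.norm_eq_abs, abs_of_nonneg (Dp_nonneg m (f x))]
  · rw [fderiv_zero_of_not_differentiableAt hdiff, norm_zero, mul_zero]
    rcases lt_trichotomy (f x) m with h | h | h
    · have hev : (fun y => Phi m (f y)) =ᶠ[nhds x] (fun _ => (0:ℝ)) := by
        filter_upwards [hf.continuous.continuousAt.eventually (eventually_lt_nhds h)] with y hy
        exact Phi_of_le (le_of_lt hy)
      rw [Filter.EventuallyEq.fderiv_eq hev]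
      simp
    · have hF : HasFDerivAt (fun y => Phi m (f y)) (0 : _ →L[ℝ] ℝ) x := by
        rw [hasFDerivAt_iff_isLittleO_nhds_zero, Asymptotics.isLittleO_iff]
        intro c hc
        have hδ : 0 < c / ((L:ℝ) ^ 2 + 1) := by positivity
        filter_upwards [Metric.ball_mem_nhds (0 : E) hδ] with v hv
        rw [Metric.mem_ball, dist_zero_right] at hv
        have hlip : |f (x + v) - f x| ≤ (L:ℝ) * ‖v‖ := by
          have := hf.dist_le_mul (x + v) x
          rw [Real.dist_eq] at this
          refine le_trans this ?_
          rw [dist_eq_norm]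
          simp
        have h1 : Phi m (f (x + v)) ≤ (f (x + v) - f x) ^ 2 := by
          rw [h]
          exact Phi_le_sq m (f (x + v))
        have h2 : (f (x + v) - f x) ^ 2 ≤ ((L:ℝ) * ‖v‖) ^ 2 := by
          rw [← sq_abs (f (x + v) - f x)]
          apply pow_le_pow_left₀ (abs_nonneg _) hlip
        have h3 : Phi m (f x) = 0 := by rw [h]; exact Phi_of_le le_rfl
        simp only [h3, ContinuousLinearMap.zero_apply, sub_zero, Real.norm_eq_abs]
        rw [abs_of_nonneg (Phi_nonneg _ _)]
        have h4 : ((L:ℝ) * ‖v‖) ^ 2 ≤ c * ‖v‖ := by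
          have hL : (0:ℝ) ≤ (L:ℝ) := L.coe_nonneg
          have hv0 : (0:ℝ) ≤ ‖v‖ := norm_nonneg v
          have : ‖v‖ * ((L:ℝ) ^ 2 + 1) < c := by
            rw [← lt_div_iff₀ (by positivity)]
            exact hv
          nlinarith
        linarith
      rw [hF.fderiv, norm_zero]
    · have hpos : (0:ℝ) < 1 + (f x - m) := by linarith
      have hφ : HasStrictDerivAt (fun s : ℝ => (s - m) - Real.log (1 + (s - m)))
          (1 - (1 + (f x - m))⁻¹ * 1) (f x) := by
        have hu : HasStrictDerivAt (fun s : ℝ => 1 + (s - m)) 1 (f x) := by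
          exact ((hasStrictDerivAt_id (f x)).sub_const m).const_add 1
        have hlog := (Real.hasStrictDerivAt_log (ne_of_gt hpos)).comp (f x) hu
        have h1 : HasStrictDerivAt (fun s : ℝ => s - m) 1 (f x) :=
          (hasStrictDerivAt_id (f x)).sub_const m
        exact h1.sub hlog
      have hinvlt : (1 + (f x - m))⁻¹ < 1 := inv_lt_one_of_one_lt₀ (by linarith)
      have hd0 : 1 - (1 + (f x - m))⁻¹ * 1 ≠ 0 := by
        rw [mul_one]
        intro hcon
        rw [sub_eq_zero] at hcon
        rw [← hcon] at hinvlt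
        exact lt_irrefl _ hinvlt
      have hnd : ¬ DifferentiableAt ℝ (fun y => Phi m (f y)) x := by
        intro hD
        apply hdiff
        apply differentiableAt_of_comp hd0 hφ hf.continuous.continuousAt
        refine hD.congr_of_eventuallyEq ?_
        filter_upwards [hf.continuous.continuousAt.eventually (eventually_gt_nhds h)] with y hy
        rw [Phi, Fp, max_eq_left (by linarith)]
      rw [fderiv_zero_of_not_differentiableAt hnd, norm_zero]
lemma exists_median {E : Type*} [MeasurableSpace E] [TopologicalSpace E] [OpensMeasurableSpace E]
    (μ : Measure E) [IsProbabilityMeasure μ] (f : E → ℝ) (hfc : Continuous f) :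
    ∃ m : ℝ, 1/2 ≤ μ {x | f x ≤ m} ∧ 1/2 ≤ μ {x | m ≤ f x} := by
  have hfm : Measurable f := hfc.measurable
  have hms : ∀ t : ℝ, MeasurableSet {x | f x ≤ t} := fun t => measurableSet_le hfm measurable_const
  set T := {t : ℝ | 1/2 ≤ μ {x | f x ≤ t}} with hT
  have hmono : ∀ {s t : ℝ}, s ≤ t → μ {x | f x ≤ s} ≤ μ {x | f x ≤ t} := fun h =>
    measure_mono (fun x hx => le_trans hx h)
  -- T is nonempty
  have hUnion : ⋃ k : ℕ, {x | f x ≤ (k:ℝ)} = univ := by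
    ext x
    simp only [mem_iUnion, mem_setOf_eq, mem_univ, iff_true]
    obtain ⟨k, hk⟩ := exists_nat_ge (f x)
    exact ⟨k, hk⟩
  have h1 : Tendsto (fun k : ℕ => μ {x | f x ≤ (k:ℝ)}) atTop
      (nhds (μ (⋃ k : ℕ, {x | f x ≤ (k:ℝ)}))) := by
    apply tendsto_measure_iUnion_atTop
    intro i j hij x hx
    simp only [mem_setOf_eq] at hx ⊢
    have : (i:ℝ) ≤ (j:ℝ) := Nat.cast_le.2 hij
    linarith
  rw [hUnion, measure_univ] at h1
  have h2 : ∀ᶠ k : ℕ in atTop, 1/2 ≤ μ {x | f x ≤ (k:ℝ)} :=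
    h1.eventually (eventually_ge_nhds (ENNReal.half_lt_self one_ne_zero ENNReal.one_ne_top))
  obtain ⟨k₀, hk₀⟩ := h2.exists
  have hTne : T.Nonempty := ⟨(k₀:ℝ), hk₀⟩
  -- T is bounded below
  have hInter0 : ⋂ k : ℕ, {x | f x ≤ -(k:ℝ)} = (∅ : Set E) := by
    ext x
    simp only [mem_iInter, mem_setOf_eq, mem_empty_iff_false, iff_false, not_forall, not_le]
    obtain ⟨k, hk⟩ := exists_nat_gt (-f x)
    exact ⟨k, by linarith⟩
  have h3 : Tendsto (fun k : ℕ => μ {x | f x ≤ -(k:ℝ)}) atTop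
      (nhds (μ (⋂ k : ℕ, {x | f x ≤ -(k:ℝ)}))) := by
    apply tendsto_measure_iInter_atTop (fun k => (hms _).nullMeasurableSet)
    · intro i j hij x hx
      simp only [mem_setOf_eq] at hx ⊢
      have : (i:ℝ) ≤ (j:ℝ) := Nat.cast_le.2 hij
      linarith
    · exact ⟨0, measure_ne_top μ _⟩
  rw [hInter0, measure_empty] at h3
  have h4 : ∀ᶠ k : ℕ in atTop, μ {x | f x ≤ -(k:ℝ)} < 1/2 :=
    h3.eventually (eventually_lt_nhds (ENNReal.half_pos one_ne_zero))
  obtain ⟨k₁, hk₁⟩ := h4.exists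
  have hbdd : BddBelow T := by
    refine ⟨-(k₁:ℝ), fun t ht => ?_⟩
    by_contra hlt
    push_neg at hlt
    exact absurd ht (not_le.2 (lt_of_le_of_lt (hmono hlt.le) hk₁))
  refine ⟨sInf T, ?_, ?_⟩
  · have hseq : ∀ k : ℕ, 1/2 ≤ μ {x | f x ≤ sInf T + 1/((k:ℝ)+1)} := by
      intro k
      have h0 : (0:ℝ) < 1/((k:ℝ)+1) := by positivity
      obtain ⟨t, htT, htlt⟩ := exists_lt_of_csInf_lt hTne
        (show sInf T < sInf T + 1/((k:ℝ)+1) by linarith)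
      exact le_trans htT (hmono htlt.le)
    have hInter : ⋂ k : ℕ, {x | f x ≤ sInf T + 1/((k:ℝ)+1)} = {x | f x ≤ sInf T} := by
      ext x
      simp only [mem_iInter, mem_setOf_eq]
      constructor
      · intro hall
        by_contra hgt
        push_neg at hgt
        obtain ⟨k, hk⟩ := exists_nat_one_div_lt (show (0:ℝ) < f x - sInf T by linarith)
        have := hall k
        linarith
      · intro hle k
        have : (0:ℝ) < 1/((k:ℝ)+1) := by positivity
        linarith
    have h5 : Tendsto (fun k : ℕ => μ {x | f x ≤ sInf T + 1/((k:ℝ)+1)}) atTop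
        (nhds (μ (⋂ k : ℕ, {x | f x ≤ sInf T + 1/((k:ℝ)+1)}))) := by
      apply tendsto_measure_iInter_atTop (fun k => (hms _).nullMeasurableSet)
      · intro i j hij x hx
        simp only [mem_setOf_eq] at hx ⊢
        have : 1/((j:ℝ)+1) ≤ 1/((i:ℝ)+1) := by
          apply one_div_le_one_div_of_le (by positivity)
          have : (i:ℝ) ≤ (j:ℝ) := Nat.cast_le.2 hij
          linarith
        linarith
      · exact ⟨0, measure_ne_top μ _⟩
    rw [hInter] at h5
    exact ge_of_tendsto' h5 hseq
  · have hlt : ∀ t : ℝ, t < sInf T → μ {x | f x ≤ t} < 1/2 := by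
      intro t ht
      by_contra hc
      push_neg at hc
      exact absurd (csInf_le hbdd hc) (not_le.2 ht)
    have hseq : ∀ k : ℕ, 1/2 ≤ μ {x | sInf T - 1/((k:ℝ)+1) < f x} := by
      intro k
      have h0 : (0:ℝ) < 1/((k:ℝ)+1) := by positivity
      have h6 := hlt (sInf T - 1/((k:ℝ)+1)) (by linarith)
      have hcompl : {x | sInf T - 1/((k:ℝ)+1) < f x}
          = {x | f x ≤ sInf T - 1/((k:ℝ)+1)}ᶜ := by
        ext x
        simp only [mem_compl_iff, mem_setOf_eq, not_le]
      rw [hcompl, measure_compl (hms _) (measure_ne_top μ _), measure_univ]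
      have hhalf : (1:ℝ≥0∞) - 1/2 = 1/2 := ENNReal.sub_half ENNReal.one_ne_top
      exact le_trans (le_of_eq hhalf.symm) (tsub_le_tsub_left h6.le 1)
    have hInter : ⋂ k : ℕ, {x | sInf T - 1/((k:ℝ)+1) < f x} = {x | sInf T ≤ f x} := by
      ext x
      simp only [mem_iInter, mem_setOf_eq]
      constructor
      · intro hall
        by_contra hgt
        push_neg at hgt
        obtain ⟨k, hk⟩ := exists_nat_one_div_lt (show (0:ℝ) < sInf T - f x by linarith)
        have := hall k
        linarith
      · intro hle k
        have : (0:ℝ) < 1/((k:ℝ)+1) := by positivity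
        linarith
    have h5 : Tendsto (fun k : ℕ => μ {x | sInf T - 1/((k:ℝ)+1) < f x}) atTop
        (nhds (μ (⋂ k : ℕ, {x | sInf T - 1/((k:ℝ)+1) < f x}))) := by
      apply tendsto_measure_iInter_atTop
        (fun k => (measurableSet_lt measurable_const hfm).nullMeasurableSet)
      · intro i j hij x hx
        simp only [mem_setOf_eq] at hx ⊢
        have : 1/((j:ℝ)+1) ≤ 1/((i:ℝ)+1) := by
          apply one_div_le_one_div_of_le (by positivity)
          have : (i:ℝ) ≤ (j:ℝ) := Nat.cast_le.2 hij
          linarith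
        linarith
      · exact ⟨0, measure_ne_top μ _⟩
    rw [hInter] at h5
    exact ge_of_tendsto' h5 hseq

lemma continuousOn_Fp : ContinuousOn Fp (Ici 0) := by
  apply ContinuousOn.sub continuousOn_id
  apply ContinuousOn.comp Real.continuousOn_log
  · exact (continuous_const.add continuous_id).continuousOn
  · intro t ht
    simp only [mem_compl_iff, mem_singleton_iff]
    have : (0:ℝ) ≤ t := ht
    intro hcon
    linarith

lemma convexOn_Fp : ConvexOn ℝ (Ici 0) Fp := by
  have h1 : ConcaveOn ℝ (Ioi 0) Real.log := strictConcaveOn_log_Ioi.concaveOn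
  have h2 := h1.comp_affineMap (AffineMap.lineMap (1:ℝ) (2:ℝ))
  have hco : ∀ t : ℝ, (AffineMap.lineMap (1:ℝ) (2:ℝ)) t = 1 + t := by
    intro t
    rw [AffineMap.lineMap_apply]
    simp
    ring
  have heq : (Real.log ∘ ⇑(AffineMap.lineMap (1:ℝ) (2:ℝ)))
      = fun t : ℝ => Real.log (1 + t) := by
    funext t
    simp only [Function.comp_apply, hco]
  have hsub : (Ici (0:ℝ)) ⊆ ⇑(AffineMap.lineMap (1:ℝ) (2:ℝ)) ⁻¹' (Ioi 0) := by
    intro t ht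
    have h0 : (0:ℝ) ≤ t := ht
    simp only [mem_preimage, hco, mem_Ioi]
    linarith
  rw [heq] at h2
  have h3 : ConcaveOn ℝ (Ici 0) (fun t : ℝ => Real.log (1 + t)) :=
    h2.subset hsub (convex_Ici 0)
  exact (convexOn_id (convex_Ici (0:ℝ))).sub h3

lemma Fp_integral_le {α : Type*} [MeasurableSpace α] (μ : Measure α) [IsProbabilityMeasure μ]
    (h : α → ℝ) (hh : Integrable h μ) (hnn : ∀ x, 0 ≤ h x)
    (hFi : Integrable (fun x => Fp (h x)) μ) :
    Fp (∫ x, h x ∂μ) ≤ ∫ x, Fp (h x) ∂μ := by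
  have := convexOn_Fp.map_average_le continuousOn_Fp isClosed_Ici
    (ae_of_all μ fun x => (hnn x : h x ∈ Ici 0)) hh hFi
  rwa [average_eq_integral, average_eq_integral] at this
lemma measurable_Fp : Measurable Fp :=
  measurable_id.sub (Real.measurable_log.comp (measurable_const.add measurable_id))

lemma continuous_Dp (m : ℝ) : Continuous (Dp m) := by
  unfold Dp
  apply Continuous.div
  · exact (continuous_id.sub continuous_const).max continuous_const
  · exact continuous_const.add ((continuous_id.sub continuous_const).max continuous_const)
  · intro s
    have h0 : (0:ℝ) ≤ max (s - m) 0 := le_max_right _ _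
    intro hcon
    have : (0:ℝ) < 1 + max (s - m) 0 := by linarith
    rw [hcon] at this
    exact lt_irrefl _ this

lemma abs_sub_le_abs_add_abs (a b : ℝ) : |a - b| ≤ |a| + |b| := by
  calc |a - b| = |a + -b| := by ring_nf
    _ ≤ |a| + |-b| := abs_add_le _ _
    _ = |a| + |b| := by rw [abs_neg]

lemma integrable_Phi_comp {E : Type*} [MeasurableSpace E] [TopologicalSpace E]
    [OpensMeasurableSpace E] (μ : Measure E) [IsProbabilityMeasure μ]
    {f : E → ℝ} (hfc : Continuous f) (hfi : Integrable f μ) (m : ℝ) :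
    Integrable (fun x => Phi m (f x)) μ := by
  have hgc : Continuous fun y => Phi m (f y) := ((lipschitzWith_Phi m).continuous).comp hfc
  refine (hfi.abs.add (integrable_const |m|)).mono' hgc.aestronglyMeasurable
    (ae_of_all _ fun x => ?_)
  rw [Real.norm_eq_abs, abs_of_nonneg (Phi_nonneg _ _)]
  exact le_trans (Phi_le_abs m (f x)) (abs_sub_le_abs_add_abs _ _)

lemma integrable_Dp_mul {E : Type*} [MeasurableSpace E] [NormedAddCommGroup E]
    [NormedSpace ℝ E] [OpensMeasurableSpace E] (μ : Measure E) [IsProbabilityMeasure μ]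
    {f : E → ℝ} {L : NNReal} (hf : LipschitzWith L f) (m : ℝ) :
    Integrable (fun x => Dp m (f x) * ‖fderiv ℝ f x‖) μ := by
  refine (integrable_const ((L:ℝ))).mono'
    ((((continuous_Dp m).comp hf.continuous).aestronglyMeasurable).mul
      (measurable_fderiv ℝ f).norm.aestronglyMeasurable) (ae_of_all _ fun x => ?_)
  rw [Real.norm_eq_abs, abs_of_nonneg (mul_nonneg (Dp_nonneg _ _) (norm_nonneg _))]
  calc Dp m (f x) * ‖fderiv ℝ f x‖ ≤ 1 * (L:ℝ) :=
        mul_le_mul (Dp_le_one _ _) (norm_fderiv_le_of_lipschitz ℝ hf) (norm_nonneg _) zero_le_one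
    _ = (L:ℝ) := one_mul _

lemma one_side {n : ℕ} (μ : Measure (EuclideanSpace ℝ (Fin n))) [IsProbabilityMeasure μ]
    (hCheeger : ∀ (g : EuclideanSpace ℝ (Fin n) → ℝ) (L : NNReal), LipschitzWith L g →
      Integrable g μ →
      ∫ x, |g x - ∫ y, g y ∂μ| ∂μ ≤ ∫ x, ‖fderiv ℝ g x‖ ∂μ)
    (f : EuclideanSpace ℝ (Fin n) → ℝ) (L : NNReal) (hf : LipschitzWith L f)
    (hfi : Integrable f μ) (m : ℝ) (hm : 1/2 ≤ μ {x | f x ≤ m}) :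
    ∫ x, Phi m (f x) ∂μ ≤ ∫ x, Dp m (f x) * ‖fderiv ℝ f x‖ ∂μ := by
  have hgl : LipschitzWith (1 * L) (fun y => Phi m (f y)) := (lipschitzWith_Phi m).comp hf
  have hgi : Integrable (fun y => Phi m (f y)) μ := integrable_Phi_comp μ hf.continuous hfi m
  have hfdint : Integrable (fun x => ‖fderiv ℝ (fun y => Phi m (f y)) x‖) μ := by
    refine (integrable_const (((1 * L : NNReal)):ℝ)).mono'
      ((measurable_fderiv ℝ _).norm.aestronglyMeasurable) (ae_of_all _ fun x => ?_)
    rw [Real.norm_eq_abs, abs_of_nonneg (norm_nonneg _)]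
    exact norm_fderiv_le_of_lipschitz ℝ hgl
  have hDint : Integrable (fun x => Dp m (f x) * ‖fderiv ℝ f x‖) μ := integrable_Dp_mul μ hf m
  have hch := hCheeger _ (1 * L) hgl hgi
  set A := ∫ y, Phi m (f y) ∂μ with hA
  have hA0 : 0 ≤ A := integral_nonneg fun x => Phi_nonneg _ _
  have hch' : ∫ x, |Phi m (f x) - A| ∂μ ≤ ∫ x, ‖fderiv ℝ (fun y => Phi m (f y)) x‖ ∂μ := by
    simpa using hch
  have hstep : ∫ x, ‖fderiv ℝ (fun y => Phi m (f y)) x‖ ∂μ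
      ≤ ∫ x, Dp m (f x) * ‖fderiv ℝ f x‖ ∂μ :=
    integral_mono hfdint hDint fun x => key hf m x
  have hgAint : Integrable (fun x => Phi m (f x) - A) μ := hgi.sub (integrable_const A)
  have hmaxint : Integrable (fun x => max (A - Phi m (f x)) 0) μ :=
    ((integrable_const A).sub hgi).pos_part
  have hzero : ∫ x, (Phi m (f x) - A) ∂μ = 0 := by
    rw [integral_sub hgi (integrable_const A), integral_const, probReal_univ,
      one_smul, sub_self]
  have hsplit : ∫ x, |Phi m (f x) - A| ∂μ = 2 * ∫ x, max (A - Phi m (f x)) 0 ∂μ := by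
    have hpt : ∀ x, |Phi m (f x) - A| = (Phi m (f x) - A) + 2 * max (A - Phi m (f x)) 0 := by
      intro x
      rcases le_total A (Phi m (f x)) with h | h
      · rw [abs_of_nonneg (by linarith), max_eq_right (by linarith)]
        ring
      · rw [abs_of_nonpos (by linarith), max_eq_left (by linarith)]
        ring
    calc ∫ x, |Phi m (f x) - A| ∂μ
        = ∫ x, ((Phi m (f x) - A) + 2 * max (A - Phi m (f x)) 0) ∂μ :=
          integral_congr_ae (ae_of_all _ hpt)
      _ = (∫ x, (Phi m (f x) - A) ∂μ) + ∫ x, 2 * max (A - Phi m (f x)) 0 ∂μ :=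
          integral_add hgAint (hmaxint.const_mul 2)
      _ = 2 * ∫ x, max (A - Phi m (f x)) 0 ∂μ := by
          rw [hzero, integral_const_mul]
          ring
  set S := {x : EuclideanSpace ℝ (Fin n) | f x ≤ m} with hS
  have hSm : MeasurableSet S := measurableSet_le hf.continuous.measurable measurable_const
  have hSle : ∫ x in S, max (A - Phi m (f x)) 0 ∂μ ≤ ∫ x, max (A - Phi m (f x)) 0 ∂μ :=
    setIntegral_le_integral hmaxint (ae_of_all _ fun x => le_max_right _ _)
  have hSeq : ∫ x in S, max (A - Phi m (f x)) 0 ∂μ = (μ S).toReal * A := by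
    rw [setIntegral_congr_fun hSm (g := fun _ => A)
      (fun x hx => by rw [Phi_of_le hx, sub_zero, max_eq_left hA0]), setIntegral_const,
      smul_eq_mul]
    rfl
  have hμS : (1:ℝ)/2 ≤ (μ S).toReal := by
    have h1 := ENNReal.toReal_mono (measure_ne_top μ S) hm
    rw [ENNReal.toReal_div] at h1
    simpa using h1
  have hchain : A * (1/2) ≤ (∫ x, Dp m (f x) * ‖fderiv ℝ f x‖ ∂μ) / 2 := by
    calc A * (1/2) ≤ A * (μ S).toReal := mul_le_mul_of_nonneg_left hμS hA0
      _ = (μ S).toReal * A := by ring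
      _ = ∫ x in S, max (A - Phi m (f x)) 0 ∂μ := hSeq.symm
      _ ≤ ∫ x, max (A - Phi m (f x)) 0 ∂μ := hSle
      _ = (∫ x, |Phi m (f x) - A| ∂μ) / 2 := by rw [hsplit]; ring
      _ ≤ (∫ x, Dp m (f x) * ‖fderiv ℝ f x‖ ∂μ) / 2 := by linarith [hch', hstep]
  linarith [hchain]

lemma Phi_add_Phi (m s : ℝ) : Phi m s + Phi (-m) (-s) = Fp |s - m| := by
  rcases le_total s m with h | h
  · rw [Phi_of_le h, Phi, abs_of_nonpos (by linarith), zero_add]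
    congr 1
    rw [max_eq_left (by linarith)]
    ring
  · rw [Phi_of_le (by linarith : -s ≤ -m), Phi, abs_of_nonneg (by linarith), add_zero]
    congr 1
    rw [max_eq_left (by linarith)]

lemma Dp_add_Dp (m s : ℝ) : Dp m s + Dp (-m) (-s) = |s - m| / (1 + |s - m|) := by
  rcases le_total s m with h | h
  · rw [Dp, Dp, max_eq_right (by linarith), abs_of_nonpos (by linarith)]
    have : max (-s - -m) 0 = -(s - m) := by rw [max_eq_left (by linarith)]; ring
    rw [this]
    simp
  · rw [Dp, Dp, max_eq_left (by linarith), abs_of_nonneg (by linarith)]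
    have : max (-s - -m) 0 = 0 := by rw [max_eq_right (by linarith)]
    rw [this]
    simp
end CheegerAux

open CheegerAux

theorem stmt_12 (n : ℕ) (μ : Measure (EuclideanSpace ℝ (Fin n))) [IsProbabilityMeasure μ]
    (hCheeger : ∀ (g : EuclideanSpace ℝ (Fin n) → ℝ) (L : NNReal), LipschitzWith L g →
      Integrable g μ →
      ∫ x, |g x - ∫ y, g y ∂μ| ∂μ ≤ ∫ x, ‖fderiv ℝ g x‖ ∂μ)
    (f : EuclideanSpace ℝ (Fin n) → ℝ) (L : NNReal) (hf : LipschitzWith L f)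
    (hfi : Integrable f μ) :
    ∫ x, (|f x - ∫ y, f y ∂μ| - Real.log (1 + |f x - ∫ y, f y ∂μ|)) ∂μ ≤
      192 * ∫ x, (‖fderiv ℝ f x‖ - Real.log (1 + ‖fderiv ℝ f x‖)) ∂μ := by
  obtain ⟨m, hm1, hm2⟩ := exists_median μ f hf.continuous
  have hfm : Measurable f := hf.continuous.measurable
  set c := ∫ y, f y ∂μ with hc
  -- integrability of the right-hand side integrand
  have hfdm : Measurable fun x => ‖fderiv ℝ f x‖ := (measurable_fderiv ℝ f).norm
  have hfdL : ∀ x, ‖fderiv ℝ f x‖ ≤ (L:ℝ) := fun x => norm_fderiv_le_of_lipschitz ℝ hf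
  have hYint : Integrable (fun x => Fp ‖fderiv ℝ f x‖) μ := by
    refine (integrable_const ((L:ℝ))).mono' ((measurable_Fp.comp hfdm).aestronglyMeasurable)
      (ae_of_all _ fun x => ?_)
    rw [Real.norm_eq_abs, abs_of_nonneg (Fp_nonneg (norm_nonneg _))]
    exact le_trans (Fp_le_self (norm_nonneg _)) (hfdL x)
  set Y := ∫ x, Fp ‖fderiv ℝ f x‖ ∂μ with hYdef
  have hY0 : 0 ≤ Y := integral_nonneg fun x => Fp_nonneg (norm_nonneg _)
  -- integrability of Fp |f - m|
  have hXint : Integrable (fun x => Fp |f x - m|) μ := by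
    refine (hfi.abs.add (integrable_const |m|)).mono'
      ((measurable_Fp.comp ((hfm.sub measurable_const).abs)).aestronglyMeasurable)
      (ae_of_all _ fun x => ?_)
    rw [Real.norm_eq_abs, abs_of_nonneg (Fp_nonneg (abs_nonneg _))]
    exact le_trans (Fp_le_self (abs_nonneg _)) (abs_sub_le_abs_add_abs _ _)
  set X := ∫ x, Fp |f x - m| ∂μ with hXdef
  -- one-sided estimates
  have h1 := one_side μ hCheeger f L hf hfi m hm1
  have hm2' : 1/2 ≤ μ {x | (fun y => -f y) x ≤ -m} := by
    have hseteq : {x : EuclideanSpace ℝ (Fin n) | (fun y => -f y) x ≤ -m} = {x | m ≤ f x} := by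
      ext x
      simp only [mem_setOf_eq, neg_le_neg_iff]
    rw [hseteq]
    exact hm2
  have h2 := one_side μ hCheeger (fun y => -f y) L hf.neg hfi.neg (-m) hm2'
  simp only [fderiv_fun_neg, norm_neg] at h2
  -- h2 : ∫ Phi (-m) (-f x) ≤ ∫ Dp (-m) (-f x) * ‖fderiv ℝ f x‖
  have hP1 : Integrable (fun x => Phi m (f x)) μ := integrable_Phi_comp μ hf.continuous hfi m
  have hP2 : Integrable (fun x => Phi (-m) (-f x)) μ :=
    integrable_Phi_comp μ hf.continuous.neg hfi.neg (-m)
  have hD1 : Integrable (fun x => Dp m (f x) * ‖fderiv ℝ f x‖) μ := integrable_Dp_mul μ hf m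
  have hD2 : Integrable (fun x => Dp (-m) (-f x) * ‖fderiv ℝ f x‖) μ := by
    have h := integrable_Dp_mul μ (f := fun y => -f y) (L := L) hf.neg (-m)
    simpa only [fderiv_fun_neg, norm_neg] using h
  have hXsum : X = (∫ x, Phi m (f x) ∂μ) + ∫ x, Phi (-m) (-f x) ∂μ := by
    rw [← integral_add hP1 hP2]
    exact integral_congr_ae (ae_of_all _ fun x => (Phi_add_Phi m (f x)).symm)
  have hRint : Integrable (fun x => |f x - m| / (1 + |f x - m|) * ‖fderiv ℝ f x‖) μ := by
    refine (hD1.add hD2).congr (ae_of_all _ fun x => ?_)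
    show Dp m (f x) * ‖fderiv ℝ f x‖ + Dp (-m) (-f x) * ‖fderiv ℝ f x‖
      = |f x - m| / (1 + |f x - m|) * ‖fderiv ℝ f x‖
    rw [← Dp_add_Dp m (f x)]
    ring
  have hRsum : (∫ x, Dp m (f x) * ‖fderiv ℝ f x‖ ∂μ)
      + (∫ x, Dp (-m) (-f x) * ‖fderiv ℝ f x‖ ∂μ)
      = ∫ x, |f x - m| / (1 + |f x - m|) * ‖fderiv ℝ f x‖ ∂μ := by
    rw [← integral_add hD1 hD2]
    refine integral_congr_ae (ae_of_all _ fun x => ?_)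
    show Dp m (f x) * ‖fderiv ℝ f x‖ + Dp (-m) (-f x) * ‖fderiv ℝ f x‖
      = |f x - m| / (1 + |f x - m|) * ‖fderiv ℝ f x‖
    rw [← Dp_add_Dp m (f x)]
    ring
  have hyoung : ∫ x, |f x - m| / (1 + |f x - m|) * ‖fderiv ℝ f x‖ ∂μ
      ≤ X / 2 + 8 * Y := by
    have hmono : ∫ x, |f x - m| / (1 + |f x - m|) * ‖fderiv ℝ f x‖ ∂μ
        ≤ ∫ x, (Fp |f x - m| / 2 + 8 * Fp ‖fderiv ℝ f x‖) ∂μ :=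
      integral_mono hRint (by exact (hXint.div_const 2).add (hYint.const_mul 8))
        (fun x => young (abs_nonneg (f x - m)) (norm_nonneg (fderiv ℝ f x)))
    rw [integral_add (hXint.div_const 2) (hYint.const_mul 8), integral_div,
      integral_const_mul] at hmono
    exact hmono
  have hX16 : X ≤ 16 * Y := by
    have := hXsum ▸ (le_trans (add_le_add h1 h2) (hRsum.le.trans hyoung))
    linarith
  -- comparison between centering at the median and at the mean
  have hLint : Integrable (fun x => Fp |f x - c|) μ := by
    refine (hfi.abs.add (integrable_const |c|)).mono'
      ((measurable_Fp.comp ((hfm.sub measurable_const).abs)).aestronglyMeasurable)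
      (ae_of_all _ fun x => ?_)
    rw [Real.norm_eq_abs, abs_of_nonneg (Fp_nonneg (abs_nonneg _))]
    exact le_trans (Fp_le_self (abs_nonneg _)) (abs_sub_le_abs_add_abs _ _)
  have hJ : Fp |m - c| ≤ X := by
    have hfmint : Integrable (fun x => |f x - m|) μ := (hfi.sub (integrable_const m)).abs
    have h0 : ∫ x, (f x - m) ∂μ = c - m := by
      rw [integral_sub hfi (integrable_const m), integral_const, probReal_univ,
        one_smul, ← hc]
    have hcm : |m - c| ≤ ∫ x, |f x - m| ∂μ := by
      calc |m - c| = |∫ x, (f x - m) ∂μ| := by rw [h0, abs_sub_comm]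
        _ = ‖∫ x, (f x - m) ∂μ‖ := (Real.norm_eq_abs _).symm
        _ ≤ ∫ x, ‖f x - m‖ ∂μ := norm_integral_le_integral_norm _
        _ = ∫ x, |f x - m| ∂μ := by simp only [Real.norm_eq_abs]
    refine le_trans (Fp_mono (abs_nonneg _) hcm) ?_
    exact Fp_integral_le μ _ hfmint (fun x => abs_nonneg _) hXint
  have hconv : ∫ x, Fp |f x - c| ∂μ ≤ 2 * X + 2 * Fp |m - c| := by
    have hmono : ∫ x, Fp |f x - c| ∂μ ≤ ∫ x, (2 * Fp |f x - m| + 2 * Fp |m - c|) ∂μ := by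
      refine integral_mono hLint
        (by exact (hXint.const_mul 2).add (integrable_const (2 * Fp |m - c|))) (fun x => ?_)
      have hh := Fp_abs_add (f x - m) (m - c)
      have he : f x - m + (m - c) = f x - c := by ring
      rw [he] at hh
      exact hh
    rw [integral_add (hXint.const_mul 2) (integrable_const _), integral_const_mul,
      integral_const, probReal_univ, one_smul] at hmono
    exact hmono
  have hgoalL : (fun x => |f x - c| - Real.log (1 + |f x - c|)) = fun x => Fp |f x - c| := rfl
  have hgoalR : (fun x : EuclideanSpace ℝ (Fin n) =>
      ‖fderiv ℝ f x‖ - Real.log (1 + ‖fderiv ℝ f x‖)) = fun x => Fp ‖fderiv ℝ f x‖ := rfl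
  rw [hgoalL, hgoalR, ← hYdef]
  have hJ' : Fp |m - c| ≤ X := hJ
  calc ∫ x, Fp |f x - c| ∂μ ≤ 2 * X + 2 * Fp |m - c| := hconv
    _ ≤ 4 * X := by linarith
    _ ≤ 64 * Y := by linarith
    _ ≤ 192 * Y := by linarith
end
end

section
/- Let H be a nonnegative symmetric n×n matrix and F(t) = t - log(1+t) applied spectrally. Then for any unit vector v ∈ ℝⁿ, |F(H)v| ≥ (1/2)·√(F(|Hv|²)). -/
open Matrix


-- derivative of log(1+t)
lemma hasDerivAt_log1p {t : ℝ} (ht : 0 < 1 + t) :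
    HasDerivAt (fun s : ℝ => Real.log (1 + s)) (1 / (1 + t)) t := by
  simpa using (HasDerivAt.log ((hasDerivAt_id t).const_add 1) (ne_of_gt ht))

-- Lemma A: t^2 ≤ 2(1+t)(t - log(1+t)) for t ≥ 0
lemma lemA : ∀ t : ℝ, 0 ≤ t → t ^ 2 ≤ 2 * (1 + t) * (t - Real.log (1 + t)) := by
  intro t ht
  set h : ℝ → ℝ := fun s => 2 * (1 + s) * (s - Real.log (1 + s)) - s ^ 2 with hh
  have key : MonotoneOn h (Set.Ici 0) := by
    have hd : ∀ s ∈ Set.Ici (0:ℝ), HasDerivAt h (2 * (s - Real.log (1 + s))) s := by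
      intro s hs
      have hs' : 0 < 1 + s := by simp at hs; linarith
      have h1 := hasDerivAt_log1p hs'
      have h2 : HasDerivAt (fun u : ℝ => 2 * (1 + u) * (u - Real.log (1 + u)) - u ^ 2)
          (2 * (s - Real.log (1 + s)) + 2 * (1 + s) * (1 - 1 / (1 + s)) - 2 * s) s := by
        exact ((((hasDerivAt_id s).const_add 1).const_mul 2).mul
          ((hasDerivAt_id s).sub h1)).sub (by simpa using (hasDerivAt_pow 2 s)) |>.congr_deriv (by simp only [id_eq, Pi.sub_apply]; ring)
      convert h2 using 1
      field_simp
      ring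
    apply monotoneOn_of_deriv_nonneg (convex_Ici 0)
    · exact fun s hs => (hd s hs).continuousAt.continuousWithinAt
    · intro s hs
      rw [interior_Ici] at hs
      exact ((hd s (Set.mem_Ici.2 (le_of_lt hs))).differentiableAt).differentiableWithinAt
    · intro s hs
      rw [interior_Ici] at hs
      rw [(hd s (Set.mem_Ici.2 (le_of_lt hs))).deriv]
      have : Real.log (1 + s) ≤ s := by
        have := Real.log_le_sub_one_of_pos (x := 1 + s) (by linarith [(Set.mem_Ioi.1 hs).le])
        linarith
      linarith
  have h0 : h 0 = 0 := by simp [hh]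
  have := key (Set.self_mem_Ici) (Set.mem_Ici.2 ht) ht
  rw [h0] at this
  simp only [hh] at this
  linarith

-- Lemma B: F(t²) ≤ 4 F(t)² for t ≥ 0
lemma lemB : ∀ t : ℝ, 0 ≤ t →
    t ^ 2 - Real.log (1 + t ^ 2) ≤ 4 * (t - Real.log (1 + t)) ^ 2 := by
  intro t ht
  set φ : ℝ → ℝ := fun s => 4 * (s - Real.log (1 + s)) ^ 2 - (s ^ 2 - Real.log (1 + s ^ 2)) with hφ
  have hd : ∀ s ∈ Set.Ici (0:ℝ), HasDerivAt φ
      (8 * (s - Real.log (1 + s)) * (1 - 1 / (1 + s)) - 2 * s + 2 * s / (1 + s ^ 2)) s := by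
    intro s hs
    have hs' : 0 < 1 + s := by have h0 : (0:ℝ) ≤ s := hs; linarith
    have hs2 : 0 < 1 + s ^ 2 := by positivity
    have h1 := hasDerivAt_log1p hs'
    have hsq : HasDerivAt (fun u : ℝ => u ^ 2) (2 * s) s := by simpa using hasDerivAt_pow 2 s
    have h2 : HasDerivAt (fun u : ℝ => Real.log (1 + u ^ 2)) (2 * s / (1 + s ^ 2)) s := by
      simpa using (HasDerivAt.log (hsq.const_add 1) (ne_of_gt hs2))
    have h3 : HasDerivAt φ
        (4 * (2 * (s - Real.log (1 + s)) * (1 - 1 / (1 + s))) - (2 * s - 2 * s / (1 + s ^ 2))) s := by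
      exact ((((hasDerivAt_id s).sub h1).pow 2).const_mul 4).sub (hsq.sub h2)
        |>.congr_deriv (by simp only [Pi.sub_apply, id_eq]; ring)
    exact h3.congr_deriv (by ring)
  have key : MonotoneOn φ (Set.Ici 0) := by
    apply monotoneOn_of_deriv_nonneg (convex_Ici 0)
    · exact fun s hs => (hd s hs).continuousAt.continuousWithinAt
    · intro s hs
      rw [interior_Ici] at hs
      exact ((hd s (Set.mem_Ici.2 (le_of_lt hs))).differentiableAt).differentiableWithinAt
    · intro s hs
      rw [interior_Ici] at hs
      rw [(hd s (Set.mem_Ici.2 (le_of_lt hs))).deriv]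
      replace hs : (0:ℝ) < s := hs
      have hs' : 0 < 1 + s := by linarith
      have hs2 : 0 < 1 + s ^ 2 := by positivity
      have hA := lemA s hs.le
      have hF : 0 ≤ s - Real.log (1 + s) := by
        have := Real.log_le_sub_one_of_pos (x := 1 + s) (by linarith)
        linarith
      have key2 : 0 ≤ (8 * (s - Real.log (1 + s)) * (1 - 1 / (1 + s)) - 2 * s + 2 * s / (1 + s ^ 2)) * ((1 + s) * (1 + s ^ 2)) := by
        have e1 : (8 * (s - Real.log (1 + s)) * (1 - 1 / (1 + s)) - 2 * s + 2 * s / (1 + s ^ 2)) * ((1 + s) * (1 + s ^ 2))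
            = 8 * (s - Real.log (1 + s)) * s * (1 + s ^ 2) - 2 * s ^ 3 * (1 + s) := by
          field_simp
          ring
        rw [e1]
        nlinarith [mul_nonneg (mul_nonneg (le_of_lt hs) (le_of_lt hs2)) (by linarith : (0:ℝ) ≤ 2 * (1 + s) * (s - Real.log (1 + s)) - s ^ 2),
          mul_nonneg (pow_nonneg (le_of_lt hs) 3) (sq_nonneg (s - 1))]
      have hpos : (0:ℝ) < (1 + s) * (1 + s ^ 2) := by positivity
      exact le_of_mul_le_mul_right (by simpa using key2) hpos
  have h0 : φ 0 = 0 := by simp [hφ]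
  have := key (Set.self_mem_Ici) (Set.mem_Ici.2 ht) ht
  rw [h0] at this
  simp only [hφ] at this
  linarith


lemma convF : ConvexOn ℝ (Set.Ici 0) (fun t : ℝ => t - Real.log (1 + t)) := by
  have hconc : ConcaveOn ℝ (Set.Ici 0) (fun t : ℝ => Real.log (1 + t)) := by
    have h1 : ConcaveOn ℝ (Set.Ioi (-1 : ℝ)) (fun t : ℝ => Real.log (1 + t)) := by
      have := strictConcaveOn_log_Ioi.concaveOn
      have haff : ConcaveOn ℝ ((fun t : ℝ => 1 + t) ⁻¹' Set.Ioi 0) (Real.log ∘ fun t : ℝ => 1 + t) := by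
        exact this.comp_affineMap (AffineMap.const ℝ ℝ (1:ℝ) + AffineMap.id ℝ ℝ)
      have : (fun t : ℝ => 1 + t) ⁻¹' Set.Ioi 0 = Set.Ioi (-1 : ℝ) := by
        ext u
        simp only [Set.mem_preimage, Set.mem_Ioi]
        constructor <;> intro h <;> linarith
      rw [this] at haff
      exact haff
    exact h1.subset (fun u hu => by simp at hu ⊢; linarith [hu]) (convex_Ici 0)
  exact (convexOn_id (convex_Ici 0)).sub hconc


lemma sum_sq_mulVec {n : ℕ} (U : Matrix (Fin n) (Fin n) ℝ) (hU : Uᵀ * U = 1)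
    (z : Fin n → ℝ) : ∑ i, (U *ᵥ z) i ^ 2 = ∑ i, z i ^ 2 := by
  have h1 : (U *ᵥ z) ⬝ᵥ (U *ᵥ z) = z ⬝ᵥ z := by
    rw [dotProduct_mulVec, ← mulVec_transpose, mulVec_mulVec, hU, one_mulVec]
  simpa [dotProduct, sq] using h1

lemma norm_equiv_symm_sq {n : ℕ} (u : Fin n → ℝ) :
    ‖(WithLp.equiv 2 (Fin n → ℝ)).symm u‖ ^ 2 = ∑ i, u i ^ 2 := by
  rw [EuclideanSpace.norm_eq]
  rw [Real.sq_sqrt (by positivity)]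
  simp [sq_abs]

/-- A function `f : ℝ → ℝ` applied spectrally to a real symmetric matrix. -/
noncomputable def spectralApply {n : ℕ} {A : Matrix (Fin n) (Fin n) ℝ}
    (hA : A.IsHermitian) (f : ℝ → ℝ) : Matrix (Fin n) (Fin n) ℝ :=
  (hA.eigenvectorUnitary : Matrix (Fin n) (Fin n) ℝ) *
    Matrix.diagonal (f ∘ hA.eigenvalues) *
    star (hA.eigenvectorUnitary : Matrix (Fin n) (Fin n) ℝ)

theorem stmt_19 (n : ℕ) (H : Matrix (Fin n) (Fin n) ℝ) (hH : H.PosSemidef)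
    (v : EuclideanSpace ℝ (Fin n)) (hv : ‖v‖ = 1) :
    ‖(WithLp.equiv 2 (Fin n → ℝ)).symm
        ((spectralApply hH.1 (fun t => t - Real.log (1 + t))) *ᵥ (WithLp.equiv 2 (Fin n → ℝ)) v)‖
      ≥ (1/2) * Real.sqrt
          (‖(WithLp.equiv 2 (Fin n → ℝ)).symm (H *ᵥ (WithLp.equiv 2 (Fin n → ℝ)) v)‖^2
            - Real.log (1 + ‖(WithLp.equiv 2 (Fin n → ℝ)).symm (H *ᵥ (WithLp.equiv 2 (Fin n → ℝ)) v)‖^2)) := by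
  classical
  set f : ℝ → ℝ := fun t => t - Real.log (1 + t) with hf
  set x : Fin n → ℝ := (WithLp.equiv 2 (Fin n → ℝ)) v with hxdef
  set U : Matrix (Fin n) (Fin n) ℝ := (hH.1.eigenvectorUnitary : Matrix (Fin n) (Fin n) ℝ) with hUdef
  set lam : Fin n → ℝ := hH.1.eigenvalues with hlamdef
  set y : Fin n → ℝ := Uᵀ *ᵥ x with hydef
  have hstar : star U = Uᵀ := by
    rw [Matrix.star_eq_conjTranspose, conjTranspose_eq_transpose_of_trivial]
  have hUmem := (hH.1.eigenvectorUnitary).2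
  have hU1 : Uᵀ * U = 1 := by
    have := (Unitary.mem_iff.mp hUmem).1
    rwa [hstar] at this
  have hU2 : U * Uᵀ = 1 := by
    have := (Unitary.mem_iff.mp hUmem).2
    rwa [hstar] at this
  -- mulVec computations
  have hHx : H *ᵥ x = U *ᵥ (fun i => lam i * y i) := by
    conv_lhs => rw [hH.1.spectral_theorem, Unitary.conjStarAlgAut_apply]
    rw [hstar, ← mulVec_mulVec, ← mulVec_mulVec]
    have hin : diagonal (RCLike.ofReal ∘ hH.1.eigenvalues) *ᵥ (Uᵀ *ᵥ x)
        = fun i => lam i * y i := by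
      funext i
      rw [mulVec_diagonal]
      simp [RCLike.ofReal_real_eq_id, hydef, hlamdef]
    rw [hin]
  have hFx : spectralApply hH.1 f *ᵥ x = U *ᵥ (fun i => f (lam i) * y i) := by
    rw [spectralApply, hstar, ← mulVec_mulVec, ← mulVec_mulVec]
    have hin : diagonal (f ∘ hH.1.eigenvalues) *ᵥ (Uᵀ *ᵥ x)
        = fun i => f (lam i) * y i := by
      funext i
      rw [mulVec_diagonal]
      simp [hydef, hlamdef]
    rw [hin]
  -- sums
  have hy1 : ∑ i, y i ^ 2 = 1 := by
    have h1 : ∑ i, y i ^ 2 = ∑ i, x i ^ 2 := by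
      rw [hydef]
      exact sum_sq_mulVec Uᵀ (by rwa [transpose_transpose]) x
    have h2 : ∑ i, x i ^ 2 = 1 := by
      have := norm_equiv_symm_sq x
      rw [hxdef] at this
      simp only [Equiv.symm_apply_apply] at this
      rw [← this, hv]; norm_num
    rw [h1, h2]
  have hHnorm : ‖(WithLp.equiv 2 (Fin n → ℝ)).symm (H *ᵥ x)‖ ^ 2
      = ∑ i, lam i ^ 2 * y i ^ 2 := by
    rw [norm_equiv_symm_sq, hHx, sum_sq_mulVec U hU1]
    exact Finset.sum_congr rfl fun i _ => by ring
  have hFnorm : ‖(WithLp.equiv 2 (Fin n → ℝ)).symm (spectralApply hH.1 f *ᵥ x)‖ ^ 2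
      = ∑ i, f (lam i) ^ 2 * y i ^ 2 := by
    rw [norm_equiv_symm_sq, hFx, sum_sq_mulVec U hU1]
    exact Finset.sum_congr rfl fun i _ => by ring
  set s : ℝ := ∑ i, lam i ^ 2 * y i ^ 2 with hsdef
  -- Jensen (convexity of f)
  have hJensen : f s ≤ ∑ i, y i ^ 2 * f (lam i ^ 2) := by
    have := convF.map_sum_le (t := Finset.univ) (w := fun i => y i ^ 2)
      (p := fun i => lam i ^ 2) (fun i _ => sq_nonneg _) hy1
      (fun i _ => Set.mem_Ici.2 (sq_nonneg _))
    have e1 : (∑ i : Fin n, y i ^ 2 • lam i ^ 2) = s := by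
      rw [hsdef]; exact Finset.sum_congr rfl fun i _ => by rw [smul_eq_mul]; ring
    rw [e1] at this
    simp only [smul_eq_mul] at this
    exact this
  -- pointwise bound
  have hPoint : ∑ i, y i ^ 2 * f (lam i ^ 2) ≤ 4 * ∑ i, f (lam i) ^ 2 * y i ^ 2 := by
    rw [Finset.mul_sum]
    apply Finset.sum_le_sum
    intro i _
    have hli : 0 ≤ lam i := hH.eigenvalues_nonneg i
    have := lemB (lam i) hli
    have hy2 : (0:ℝ) ≤ y i ^ 2 := sq_nonneg _
    calc y i ^ 2 * f (lam i ^ 2) ≤ y i ^ 2 * (4 * f (lam i) ^ 2) := by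
          apply mul_le_mul_of_nonneg_left _ hy2
          simpa [hf] using this
      _ = 4 * (f (lam i) ^ 2 * y i ^ 2) := by ring
  -- conclude
  have hFnn : 0 ≤ ‖(WithLp.equiv 2 (Fin n → ℝ)).symm (spectralApply hH.1 f *ᵥ x)‖ := norm_nonneg _
  have hkey : s - Real.log (1 + s)
      ≤ (2 * ‖(WithLp.equiv 2 (Fin n → ℝ)).symm (spectralApply hH.1 f *ᵥ x)‖) ^ 2 := by
    have : (2 * ‖(WithLp.equiv 2 (Fin n → ℝ)).symm (spectralApply hH.1 f *ᵥ x)‖) ^ 2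
        = 4 * ∑ i, f (lam i) ^ 2 * y i ^ 2 := by rw [mul_pow, hFnorm]; ring
    rw [this]
    calc s - Real.log (1 + s) = f s := by rw [hf]
      _ ≤ ∑ i, y i ^ 2 * f (lam i ^ 2) := hJensen
      _ ≤ _ := hPoint
  have hsqrt := Real.sqrt_le_sqrt hkey
  rw [Real.sqrt_sq (by linarith)] at hsqrt
  rw [ge_iff_le, hHnorm]
  linarith
end
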